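/- The dual total correlation decomposes as DTC(X) = Σ_{k=1}^{n−1} k·u_k(X). -/

import Mathlib

open MeasureTheory Finset

noncomputable section

variable {Ω : Type*} [MeasurableSpace Ω]

/-- Shannon entropy of a finite-valued random variable `Z` under the measure `μ`
(with the convention that the entropy of an empty tuple is `negMulLog (μ univ) = 0`
for a probability measure). -/
def ent {α : Type*} [Fintype α] (μ : Measure Ω) (Z : Ω → α) : ℝ :=
  ∑ z : α, Real.negMulLog ((μ (Z ⁻¹' {z})).toReal)

/-- Conditional entropy `H(A | B)`. -/
def condEnt {α β : Type*} [Fintype α] [Fintype β] (μ : Measure Ω)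
    (A : Ω → α) (B : Ω → β) : ℝ :=
  ent μ (fun ω => (A ω, B ω)) - ent μ B

/-- Mutual information `I(A ; B)`. -/
def mi {α β : Type*} [Fintype α] [Fintype β] (μ : Measure Ω)
    (A : Ω → α) (B : Ω → β) : ℝ :=
  ent μ A + ent μ B - ent μ (fun ω => (A ω, B ω))

/-- Conditional mutual information `I(A ; B | C)`. -/
def cmi {α β γ : Type*} [Fintype α] [Fintype β] [Fintype γ] (μ : Measure Ω)
    (A : Ω → α) (B : Ω → β) (C : Ω → γ) : ℝ :=
  ent μ (fun ω => (A ω, C ω)) + ent μ (fun ω => (B ω, C ω))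
    - ent μ (fun ω => (A ω, B ω, C ω)) - ent μ C

/-- The sub-tuple `X^a = (X_i)_{i ∈ a}` of the random vector `X = (X_1, …, X_n)`. -/
def restr {n : ℕ} {S : Type*} (X : Fin n → Ω → S) (a : Finset (Fin n)) :
    Ω → (a → S) :=
  fun ω i => X i.1 ω

/-- Average subset entropy `r_k(X) = C(n,k)⁻¹ ∑_{|a| = k} H(X^a)`. -/
def rE {n : ℕ} {S : Type*} [Fintype S] (μ : Measure Ω) (X : Fin n → Ω → S) (k : ℕ) : ℝ :=
  ((n.choose k : ℝ))⁻¹ *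
    ∑ a ∈ univ.powerset.filter (fun a : Finset (Fin n) => a.card = k), ent μ (restr X a)

/-- Average conditional pairwise mutual information
`u_k(X) = (C(n,k+1) C(k+1,2))⁻¹ ∑_{i<j} ∑_{|a| = k-1, i,j ∉ a} I(X_i ; X_j | X^a)`. -/
def uI {n : ℕ} {S : Type*} [Fintype S] (μ : Measure Ω) (X : Fin n → Ω → S) (k : ℕ) : ℝ :=
  ((n.choose (k + 1) : ℝ) * ((k + 1).choose 2 : ℝ))⁻¹ *
    ∑ p ∈ univ.filter (fun p : Fin n × Fin n => p.1 < p.2),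
      ∑ a ∈ (univ \ ({p.1, p.2} : Finset (Fin n))).powerset.filter
          (fun a : Finset (Fin n) => a.card = k - 1),
        cmi μ (X p.1) (X p.2) (restr X a)


section AuxEnt

lemma ent_comp_inj {α β : Type*} [Fintype α] [Fintype β] (μ : Measure Ω)
    (Z : Ω → α) (f : α → β) (hf : Function.Injective f) :
    ent μ (f ∘ Z) = ent μ Z := by
  classical
  unfold ent
  rw [show (univ : Finset β) = univ.image f ∪ (univ \ univ.image f) by
    rw [Finset.union_sdiff_of_subset (Finset.subset_univ _)]]
  rw [Finset.sum_union (Finset.disjoint_sdiff)]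
  rw [Finset.sum_image (fun a _ b _ h => hf h)]
  have h1 : ∀ w : α, (f ∘ Z) ⁻¹' {f w} = Z ⁻¹' {w} := by
    intro w; ext ω; simp [hf.eq_iff]
  have h2 : ∀ z ∈ univ \ univ.image f, Real.negMulLog ((μ ((f ∘ Z) ⁻¹' {z})).toReal) = 0 := by
    intro z hz
    simp only [Finset.mem_sdiff, Finset.mem_image, not_exists] at hz
    have : (f ∘ Z) ⁻¹' {z} = ∅ := by
      ext ω
      simp only [Set.mem_preimage, Set.mem_singleton_iff, Function.comp, Set.mem_empty_iff_false, iff_false]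
      exact fun h => hz.2 (Z ω) ⟨Finset.mem_univ _, h⟩
    rw [this]; simp [Real.negMulLog_zero]
  rw [Finset.sum_eq_zero h2]
  simp only [h1, add_zero]

variable {n : ℕ} {S : Type*} [Fintype S]

lemma ent_pair_restr (μ : Measure Ω) (X : Fin n → Ω → S) {i : Fin n} {a : Finset (Fin n)}
    (hi : i ∉ a) :
    ent μ (fun ω => (X i ω, restr X a ω)) = ent μ (restr X (insert i a)) := by
  have hf : Function.Injective
      (fun (g : {x // x ∈ insert i a} → S) =>
        (g (Subtype.mk i (Finset.mem_insert_self i a)),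
         fun (j : a) => g (Subtype.mk j.1 (Finset.mem_insert_of_mem j.2)))) := by
    intro g g' h
    funext x
    obtain ⟨x, hx⟩ := x
    rcases Finset.mem_insert.mp hx with rfl | hxa
    · exact congrArg Prod.fst h
    · exact congrFun (congrArg Prod.snd h) ⟨x, hxa⟩
  rw [← ent_comp_inj μ (restr X (insert i a)) _ hf]
  rfl

lemma ent_triple_restr (μ : Measure Ω) (X : Fin n → Ω → S) {i j : Fin n} {a : Finset (Fin n)}
    (hi : i ∉ a) (hj : j ∉ a) (hij : i ≠ j) :
    ent μ (fun ω => (X i ω, X j ω, restr X a ω)) = ent μ (restr X (insert i (insert j a))) := by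
  have hf : Function.Injective
      (fun (g : {x // x ∈ insert i (insert j a)} → S) =>
        (g (Subtype.mk i (Finset.mem_insert_self i _)),
         g (Subtype.mk j (Finset.mem_insert_of_mem (Finset.mem_insert_self j a))),
         fun (l : a) => g (Subtype.mk l.1 (Finset.mem_insert_of_mem (Finset.mem_insert_of_mem l.2))))) := by
    intro g g' h
    funext x
    obtain ⟨x, hx⟩ := x
    rcases Finset.mem_insert.mp hx with rfl | hx'
    · exact congrArg Prod.fst h
    · rcases Finset.mem_insert.mp hx' with rfl | hxa
      · exact congrArg Prod.fst (congrArg Prod.snd h)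
      · exact congrFun (congrArg Prod.snd (congrArg Prod.snd h)) ⟨x, hxa⟩
  rw [← ent_comp_inj μ (restr X (insert i (insert j a))) _ hf]
  rfl

lemma cmi_restr (μ : Measure Ω) (X : Fin n → Ω → S) {i j : Fin n} {a : Finset (Fin n)}
    (hi : i ∉ a) (hj : j ∉ a) (hij : i ≠ j) :
    cmi μ (X i) (X j) (restr X a) =
      ent μ (restr X (insert i a)) + ent μ (restr X (insert j a))
        - ent μ (restr X (insert i (insert j a))) - ent μ (restr X a) := by
  rw [cmi, ent_pair_restr μ X hi, ent_pair_restr μ X hj, ent_triple_restr μ X hi hj hij]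

end AuxEnt

section AuxCount

variable {n : ℕ}

lemma sum_pair_swap (g : Fin n × Fin n → ℝ) :
    ∑ p ∈ univ.filter (fun p : Fin n × Fin n => p.1 ≠ p.2), g p
    = ∑ p ∈ univ.filter (fun p : Fin n × Fin n => p.1 < p.2), (g p + g p.swap) := by
  have hsplit : univ.filter (fun p : Fin n × Fin n => p.1 ≠ p.2)
      = univ.filter (fun p : Fin n × Fin n => p.1 < p.2) ∪
        univ.filter (fun p : Fin n × Fin n => p.2 < p.1) := by
    ext p
    simp only [mem_filter, mem_union, mem_univ, true_and]
    constructor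
    · intro h; exact lt_or_gt_of_ne h
    · rintro (h | h); exacts [ne_of_lt h, ne_of_gt h]
  have hdisj : Disjoint (univ.filter (fun p : Fin n × Fin n => p.1 < p.2))
      (univ.filter (fun p : Fin n × Fin n => p.2 < p.1)) := by
    rw [Finset.disjoint_left]
    intro p hp hq
    simp only [mem_filter] at hp hq
    exact absurd hq.2 (lt_asymm hp.2)
  rw [hsplit, Finset.sum_union hdisj, Finset.sum_add_distrib]
  congr 1
  apply Finset.sum_nbij' (i := Prod.swap) (j := Prod.swap)
  · intro p hp; simp only [mem_filter, mem_univ, true_and] at hp ⊢; exact hp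
  · intro p hp; simp only [mem_filter, mem_univ, true_and] at hp ⊢; exact hp
  · intro p _; rfl
  · intro p _; rfl
  · intro p _; rfl

lemma card_lt_pairs (c : Finset (Fin n)) :
    (univ.filter (fun p : Fin n × Fin n => p.1 < p.2 ∧ p.1 ∈ c ∧ p.2 ∈ c)).card
      = c.card.choose 2 := by
  have hcard : (univ.filter (fun p : Fin n × Fin n => p.1 < p.2 ∧ p.1 ∈ c ∧ p.2 ∈ c)).card
      = (univ.filter (fun p : Fin n × Fin n => p.2 < p.1 ∧ p.1 ∈ c ∧ p.2 ∈ c)).card := by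
    apply Finset.card_nbij' (i := Prod.swap) (j := Prod.swap)
    · intro p hp; simp only [Finset.mem_coe, mem_filter, mem_univ, true_and] at hp ⊢; tauto
    · intro p hp; simp only [Finset.mem_coe, mem_filter, mem_univ, true_and] at hp ⊢; tauto
    · intro p _; rfl
    · intro p _; rfl
  have hunion : univ.filter (fun p : Fin n × Fin n => p.1 < p.2 ∧ p.1 ∈ c ∧ p.2 ∈ c) ∪
      univ.filter (fun p : Fin n × Fin n => p.2 < p.1 ∧ p.1 ∈ c ∧ p.2 ∈ c) = c.offDiag := by
    ext p
    simp only [mem_union, mem_filter, mem_univ, true_and, Finset.mem_offDiag]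
    constructor
    · rintro (⟨h, h1, h2⟩ | ⟨h, h1, h2⟩)
      · exact ⟨h1, h2, ne_of_lt h⟩
      · exact ⟨h1, h2, ne_of_gt h⟩
    · rintro ⟨h1, h2, h⟩
      rcases lt_or_gt_of_ne h with hlt | hgt
      · exact Or.inl ⟨hlt, h1, h2⟩
      · exact Or.inr ⟨hgt, h1, h2⟩
  have hdisj : Disjoint (univ.filter (fun p : Fin n × Fin n => p.1 < p.2 ∧ p.1 ∈ c ∧ p.2 ∈ c))
      (univ.filter (fun p : Fin n × Fin n => p.2 < p.1 ∧ p.1 ∈ c ∧ p.2 ∈ c)) := by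
    rw [Finset.disjoint_left]
    intro p hp hq
    simp only [mem_filter] at hp hq
    exact absurd hq.2.1 (lt_asymm hp.2.1)
  have := Finset.card_union_of_disjoint hdisj
  rw [hunion, Finset.offDiag_card] at this
  have hmm : c.card * c.card - c.card = c.card * (c.card - 1) := by
    cases c.card with
    | zero => simp
    | succ t => rw [Nat.succ_sub_one, Nat.mul_succ, Nat.add_sub_cancel]
  rw [Nat.choose_two_right]
  rw [hmm] at this
  rw [← hcard] at this
  set x := (univ.filter (fun p : Fin n × Fin n => p.1 < p.2 ∧ p.1 ∈ c ∧ p.2 ∈ c)).card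
  set y := c.card * (c.card - 1)
  omega

lemma count1 (F : Finset (Fin n) → ℝ) {k : ℕ} (hk1 : 1 ≤ k) :
    ∑ p ∈ univ.filter (fun p : Fin n × Fin n => p.1 ≠ p.2),
      ∑ a ∈ (univ \ ({p.1, p.2} : Finset (Fin n))).powerset.filter
          (fun a : Finset (Fin n) => a.card = k - 1),
        F (insert p.1 a)
    = ((k * (n - k) : ℕ) : ℝ) *
        ∑ b ∈ univ.powerset.filter (fun b : Finset (Fin n) => b.card = k), F b := by
  have step1 : ∀ p ∈ univ.filter (fun p : Fin n × Fin n => p.1 ≠ p.2),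
      ∑ a ∈ (univ \ ({p.1, p.2} : Finset (Fin n))).powerset.filter
          (fun a : Finset (Fin n) => a.card = k - 1),
        F (insert p.1 a)
      = ∑ b ∈ univ.powerset.filter
          (fun b : Finset (Fin n) => b.card = k ∧ p.1 ∈ b ∧ p.2 ∉ b), F b := by
    intro p hp
    simp only [mem_filter, mem_univ, true_and] at hp
    apply Finset.sum_nbij' (i := fun a => insert p.1 a) (j := fun b => b.erase p.1)
    · intro a ha
      simp only [mem_filter, Finset.mem_powerset] at ha
      obtain ⟨hsub, hcard⟩ := ha
      have h1 : p.1 ∉ a := by intro h; have := hsub h; simp at this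
      have h2 : p.2 ∉ a := by intro h; have := hsub h; simp at this
      simp only [mem_filter, Finset.mem_powerset]
      refine ⟨Finset.subset_univ _, ?_, Finset.mem_insert_self _ _, ?_⟩
      · rw [Finset.card_insert_of_notMem h1, hcard]; omega
      · simp only [Finset.mem_insert, not_or]
        exact ⟨fun h => hp h.symm, h2⟩
    · intro b hb
      simp only [mem_filter, Finset.mem_powerset] at hb
      obtain ⟨-, hcard, h1, h2⟩ := hb
      simp only [mem_filter, Finset.mem_powerset]
      refine ⟨?_, ?_⟩
      · intro x hx
        rw [Finset.mem_erase] at hx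
        simp only [Finset.mem_sdiff, mem_univ, true_and, Finset.mem_insert,
          Finset.mem_singleton, not_or]
        exact ⟨hx.1, fun h => h2 (h ▸ hx.2)⟩
      · rw [Finset.card_erase_of_mem h1, hcard]
    · intro a ha
      simp only [mem_filter, Finset.mem_powerset] at ha
      have h1 : p.1 ∉ a := by intro h; have := ha.1 h; simp at this
      exact Finset.erase_insert h1
    · intro b hb
      simp only [mem_filter] at hb
      exact Finset.insert_erase hb.2.2.1
    · intro a _; rfl
  rw [Finset.sum_congr rfl step1]
  rw [Finset.sum_comm' (s' := fun b => univ.filter (fun p : Fin n × Fin n => p.1 ∈ b ∧ p.2 ∉ b))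
    (t' := univ.powerset.filter (fun b : Finset (Fin n) => b.card = k))
    (by
      intro p b
      simp only [mem_filter, mem_univ, true_and, Finset.mem_powerset, Finset.subset_univ,
        true_and]
      constructor
      · rintro ⟨h, hc, h1, h2⟩; exact ⟨⟨h1, h2⟩, hc⟩
      · rintro ⟨⟨h1, h2⟩, hc⟩; exact ⟨fun h => h2 (h ▸ h1), hc, h1, h2⟩)]
  rw [Finset.mul_sum]
  apply Finset.sum_congr rfl
  intro b hb
  simp only [mem_filter, Finset.mem_powerset] at hb
  rw [Finset.sum_const]
  have : univ.filter (fun p : Fin n × Fin n => p.1 ∈ b ∧ p.2 ∉ b) = b ×ˢ bᶜ := by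
    ext p; simp [Finset.mem_product]
  rw [this, Finset.card_product, Finset.card_compl, hb.2]
  simp [Fintype.card_fin, nsmul_eq_mul]

lemma count2 (F : Finset (Fin n) → ℝ) {k : ℕ} (hk1 : 1 ≤ k) :
    ∑ p ∈ univ.filter (fun p : Fin n × Fin n => p.1 < p.2),
      ∑ a ∈ (univ \ ({p.1, p.2} : Finset (Fin n))).powerset.filter
          (fun a : Finset (Fin n) => a.card = k - 1),
        F (insert p.1 (insert p.2 a))
    = (((k + 1).choose 2 : ℕ) : ℝ) *
        ∑ b ∈ univ.powerset.filter (fun b : Finset (Fin n) => b.card = k + 1), F b := by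
  have step1 : ∀ p ∈ univ.filter (fun p : Fin n × Fin n => p.1 < p.2),
      ∑ a ∈ (univ \ ({p.1, p.2} : Finset (Fin n))).powerset.filter
          (fun a : Finset (Fin n) => a.card = k - 1),
        F (insert p.1 (insert p.2 a))
      = ∑ b ∈ univ.powerset.filter
          (fun b : Finset (Fin n) => b.card = k + 1 ∧ p.1 ∈ b ∧ p.2 ∈ b), F b := by
    intro p hp
    simp only [mem_filter, mem_univ, true_and] at hp
    have hne : p.1 ≠ p.2 := ne_of_lt hp
    have hpair : ({p.1, p.2} : Finset (Fin n)).card = 2 := by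
      rw [Finset.card_insert_of_notMem (by simpa using hne), Finset.card_singleton]
    apply Finset.sum_nbij' (i := fun a => insert p.1 (insert p.2 a))
      (j := fun b => b \ ({p.1, p.2} : Finset (Fin n)))
    · intro a ha
      simp only [mem_filter, Finset.mem_powerset] at ha
      obtain ⟨hsub, hcard⟩ := ha
      have h1 : p.1 ∉ a := by intro h; have := hsub h; simp at this
      have h2 : p.2 ∉ a := by intro h; have := hsub h; simp at this
      have h3 : p.1 ∉ insert p.2 a := by
        simp only [Finset.mem_insert, not_or]; exact ⟨hne, h1⟩
      simp only [mem_filter, Finset.mem_powerset]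
      refine ⟨Finset.subset_univ _, ?_, Finset.mem_insert_self _ _,
        Finset.mem_insert_of_mem (Finset.mem_insert_self _ _)⟩
      rw [Finset.card_insert_of_notMem h3, Finset.card_insert_of_notMem h2, hcard]
      omega
    · intro b hb
      simp only [mem_filter, Finset.mem_powerset] at hb
      obtain ⟨-, hcard, h1, h2⟩ := hb
      have hps : ({p.1, p.2} : Finset (Fin n)) ⊆ b := by
        intro x hx
        rcases Finset.mem_insert.mp hx with rfl | hx
        · exact h1
        · rw [Finset.mem_singleton] at hx; exact hx ▸ h2
      simp only [mem_filter, Finset.mem_powerset]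
      refine ⟨?_, ?_⟩
      · intro x hx
        rw [Finset.mem_sdiff] at hx
        simp only [Finset.mem_sdiff, mem_univ, true_and]
        exact hx.2
      · rw [Finset.card_sdiff_of_subset hps, hpair, hcard]; omega
    · intro a ha
      simp only [mem_filter, Finset.mem_powerset] at ha
      have h1 : p.1 ∉ a := by intro h; have := ha.1 h; simp at this
      have h2 : p.2 ∉ a := by intro h; have := ha.1 h; simp at this
      ext x
      simp only [Finset.mem_sdiff, Finset.mem_insert, Finset.mem_singleton, not_or]
      constructor
      · rintro ⟨(rfl | rfl | hx), hne1, hne2⟩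
        · exact absurd rfl hne1
        · exact absurd rfl hne2
        · exact hx
      · intro hx
        exact ⟨Or.inr (Or.inr hx), fun h => h1 (h ▸ hx), fun h => h2 (h ▸ hx)⟩
    · intro b hb
      simp only [mem_filter, Finset.mem_powerset] at hb
      obtain ⟨-, -, h1, h2⟩ := hb
      ext x
      simp only [Finset.mem_insert, Finset.mem_sdiff, Finset.mem_singleton, not_or]
      constructor
      · rintro (rfl | rfl | ⟨hx, -⟩)
        · exact h1
        · exact h2
        · exact hx
      · intro hx
        by_cases e1 : x = p.1
        · exact Or.inl e1
        by_cases e2 : x = p.2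
        · exact Or.inr (Or.inl e2)
        · exact Or.inr (Or.inr ⟨hx, e1, e2⟩)
    · intro a _; rfl
  rw [Finset.sum_congr rfl step1]
  rw [Finset.sum_comm'
    (s' := fun b => univ.filter (fun p : Fin n × Fin n => p.1 < p.2 ∧ p.1 ∈ b ∧ p.2 ∈ b))
    (t' := univ.powerset.filter (fun b : Finset (Fin n) => b.card = k + 1))
    (by
      intro p b
      simp only [mem_filter, mem_univ, true_and, Finset.mem_powerset, Finset.subset_univ,
        true_and]
      constructor
      · rintro ⟨h, hc, h1, h2⟩; exact ⟨⟨h, h1, h2⟩, hc⟩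
      · rintro ⟨⟨h, h1, h2⟩, hc⟩; exact ⟨h, hc, h1, h2⟩)]
  rw [Finset.mul_sum]
  apply Finset.sum_congr rfl
  intro b hb
  simp only [mem_filter, Finset.mem_powerset] at hb
  rw [Finset.sum_const, card_lt_pairs b, hb.2]
  simp [nsmul_eq_mul]

lemma count3 (F : Finset (Fin n) → ℝ) {k : ℕ} (hk1 : 1 ≤ k) (hk2 : k + 1 ≤ n) :
    ∑ p ∈ univ.filter (fun p : Fin n × Fin n => p.1 < p.2),
      ∑ a ∈ (univ \ ({p.1, p.2} : Finset (Fin n))).powerset.filter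
          (fun a : Finset (Fin n) => a.card = k - 1),
        F a
    = (((n - k + 1).choose 2 : ℕ) : ℝ) *
        ∑ b ∈ univ.powerset.filter (fun b : Finset (Fin n) => b.card = k - 1), F b := by
  rw [Finset.sum_comm'
    (s' := fun b => univ.filter
      (fun p : Fin n × Fin n => p.1 < p.2 ∧ p.1 ∈ bᶜ ∧ p.2 ∈ bᶜ))
    (t' := univ.powerset.filter (fun b : Finset (Fin n) => b.card = k - 1))
    (by
      intro p a
      simp only [mem_filter, mem_univ, true_and, Finset.mem_powerset, Finset.subset_univ,
        true_and, Finset.mem_compl]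
      constructor
      · rintro ⟨h, hsub, hc⟩
        have h1 : p.1 ∉ a := by intro hx; have := hsub hx; simp at this
        have h2 : p.2 ∉ a := by intro hx; have := hsub hx; simp at this
        exact ⟨⟨h, h1, h2⟩, hc⟩
      · rintro ⟨⟨h, h1, h2⟩, hc⟩
        refine ⟨h, ?_, hc⟩
        intro x hx
        simp only [Finset.mem_sdiff, mem_univ, true_and, Finset.mem_insert,
          Finset.mem_singleton, not_or]
        exact ⟨fun e => h1 (e ▸ hx), fun e => h2 (e ▸ hx)⟩)]
  rw [Finset.mul_sum]
  apply Finset.sum_congr rfl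
  intro b hb
  simp only [mem_filter, Finset.mem_powerset] at hb
  rw [Finset.sum_const, card_lt_pairs bᶜ, Finset.card_compl, hb.2, Fintype.card_fin]
  have : n - (k - 1) = n - k + 1 := by omega
  rw [this]
  simp [nsmul_eq_mul]

end AuxCount

lemma chooseI1 {n k : ℕ} (hk1 : 1 ≤ k) (hk2 : k + 1 ≤ n) :
    k * (n - k) * n.choose k = 2 * (n.choose (k + 1) * (k + 1).choose 2) := by
  have h2 : (k + 1).choose 2 * 2 = (k + 1) * k := by
    have := Nat.choose_succ_right_eq (k + 1) 1
    simpa using this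
  have h3 : n.choose (k + 1) * (k + 1) = n.choose k * (n - k) :=
    Nat.choose_succ_right_eq n k
  symm
  calc 2 * (n.choose (k + 1) * (k + 1).choose 2)
      = n.choose (k + 1) * ((k + 1).choose 2 * 2) := by ring
    _ = n.choose (k + 1) * ((k + 1) * k) := by rw [h2]
    _ = (n.choose (k + 1) * (k + 1)) * k := by ring
    _ = (n.choose k * (n - k)) * k := by rw [h3]
    _ = k * (n - k) * n.choose k := by ring

lemma chooseI3 {n k : ℕ} (hk1 : 1 ≤ k) (hk2 : k + 1 ≤ n) :
    (n - k + 1).choose 2 * n.choose (k - 1) = n.choose (k + 1) * (k + 1).choose 2 := by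
  have h2 : (n - k + 1).choose 2 * 2 = (n - k + 1) * (n - k) := by
    have := Nat.choose_succ_right_eq (n - k + 1) 1
    simpa using this
  have h4 : n.choose k * k = n.choose (k - 1) * (n - k + 1) := by
    have := Nat.choose_succ_right_eq n (k - 1)
    have e1 : k - 1 + 1 = k := by omega
    have e2 : n - (k - 1) = n - k + 1 := by omega
    rw [e1, e2] at this
    exact this
  have key : ((n - k + 1).choose 2 * n.choose (k - 1)) * 2
      = (n.choose (k + 1) * (k + 1).choose 2) * 2 := by
    calc ((n - k + 1).choose 2 * n.choose (k - 1)) * 2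
        = ((n - k + 1).choose 2 * 2) * n.choose (k - 1) := by ring
      _ = ((n - k + 1) * (n - k)) * n.choose (k - 1) := by rw [h2]
      _ = (n - k) * (n.choose (k - 1) * (n - k + 1)) := by ring
      _ = (n - k) * (n.choose k * k) := by rw [← h4]
      _ = k * (n - k) * n.choose k := by ring
      _ = 2 * (n.choose (k + 1) * (k + 1).choose 2) := chooseI1 hk1 hk2
      _ = (n.choose (k + 1) * (k + 1).choose 2) * 2 := by ring
  omega

lemma telescope_sum (h : ℕ → ℝ) (h0 : h 0 = 0) :
    ∀ n : ℕ, 2 ≤ n →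
      ∑ k ∈ Finset.Icc 1 (n - 1), (k : ℝ) * (2 * h k - h (k + 1) - h (k - 1))
        = n * h (n - 1) - (n - 1) * h n := by
  intro n hn
  induction n with
  | zero => omega
  | succ m ih =>
    rcases Nat.lt_or_ge m 2 with hm | hm
    · interval_cases m
      · omega
      · norm_num [h0]
    · have hIcc : Finset.Icc 1 (m + 1 - 1) = Finset.Icc 1 (m - 1) ∪ {m} := by
        ext x
        simp only [Finset.mem_Icc, Finset.mem_union, Finset.mem_singleton]
        omega
      have hdisj : Disjoint (Finset.Icc 1 (m - 1)) ({m} : Finset ℕ) := by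
        simp only [Finset.disjoint_singleton_right, Finset.mem_Icc]
        omega
      rw [hIcc, Finset.sum_union hdisj, ih hm, Finset.sum_singleton]
      have e1 : m + 1 - 1 = m := by omega
      have e2 : m - 1 + 1 = m := by omega
      have e3 : ((m : ℝ) + 1) - 1 = (m : ℝ) := by ring
      push_cast [e1]
      ring


lemma uI_eq_rE {Ω S : Type*} [MeasurableSpace Ω] [Fintype S]
    {n : ℕ} (μ : Measure Ω) (X : Fin n → Ω → S) {k : ℕ} (hk1 : 1 ≤ k) (hk2 : k + 1 ≤ n) :
    uI μ X k = 2 * rE μ X k - rE μ X (k + 1) - rE μ X (k - 1) := by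
  classical
  set E : Finset (Fin n) → ℝ := fun b => ent μ (restr X b) with hE
  -- rewrite each cmi in terms of entropies of subtuples
  have hcmi : ∀ p ∈ univ.filter (fun p : Fin n × Fin n => p.1 < p.2),
      ∑ a ∈ (univ \ ({p.1, p.2} : Finset (Fin n))).powerset.filter
          (fun a : Finset (Fin n) => a.card = k - 1),
        cmi μ (X p.1) (X p.2) (restr X a)
      = ∑ a ∈ (univ \ ({p.1, p.2} : Finset (Fin n))).powerset.filter
          (fun a : Finset (Fin n) => a.card = k - 1),
        (E (insert p.1 a) + E (insert p.2 a) - E (insert p.1 (insert p.2 a)) - E a) := by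
    intro p hp
    simp only [mem_filter, mem_univ, true_and] at hp
    apply Finset.sum_congr rfl
    intro a ha
    simp only [mem_filter, Finset.mem_powerset] at ha
    have h1 : p.1 ∉ a := by intro h; have := ha.1 h; simp at this
    have h2 : p.2 ∉ a := by intro h; have := ha.1 h; simp at this
    exact cmi_restr μ X h1 h2 (ne_of_lt hp)
  rw [uI, Finset.sum_congr rfl hcmi]
  have hsplit : ∑ p ∈ univ.filter (fun p : Fin n × Fin n => p.1 < p.2),
      ∑ a ∈ (univ \ ({p.1, p.2} : Finset (Fin n))).powerset.filter
          (fun a : Finset (Fin n) => a.card = k - 1),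
        (E (insert p.1 a) + E (insert p.2 a) - E (insert p.1 (insert p.2 a)) - E a)
      = (∑ p ∈ univ.filter (fun p : Fin n × Fin n => p.1 < p.2),
          ∑ a ∈ (univ \ ({p.1, p.2} : Finset (Fin n))).powerset.filter
              (fun a : Finset (Fin n) => a.card = k - 1),
            (E (insert p.1 a) + E (insert p.2 a)))
        - (∑ p ∈ univ.filter (fun p : Fin n × Fin n => p.1 < p.2),
            ∑ a ∈ (univ \ ({p.1, p.2} : Finset (Fin n))).powerset.filter
                (fun a : Finset (Fin n) => a.card = k - 1),
              E (insert p.1 (insert p.2 a)))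
        - (∑ p ∈ univ.filter (fun p : Fin n × Fin n => p.1 < p.2),
            ∑ a ∈ (univ \ ({p.1, p.2} : Finset (Fin n))).powerset.filter
                (fun a : Finset (Fin n) => a.card = k - 1),
              E a) := by
    rw [← Finset.sum_sub_distrib, ← Finset.sum_sub_distrib]
    apply Finset.sum_congr rfl
    intro p _
    rw [← Finset.sum_sub_distrib, ← Finset.sum_sub_distrib]
  rw [hsplit]
  -- the first double sum, via the swap trick
  have hAB : ∑ p ∈ univ.filter (fun p : Fin n × Fin n => p.1 < p.2),
      ∑ a ∈ (univ \ ({p.1, p.2} : Finset (Fin n))).powerset.filter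
          (fun a : Finset (Fin n) => a.card = k - 1),
        (E (insert p.1 a) + E (insert p.2 a))
      = ((k * (n - k) : ℕ) : ℝ) *
          ∑ b ∈ univ.powerset.filter (fun b : Finset (Fin n) => b.card = k), E b := by
    rw [← count1 E hk1]
    rw [sum_pair_swap (g := fun p : Fin n × Fin n =>
      ∑ a ∈ (univ \ ({p.1, p.2} : Finset (Fin n))).powerset.filter
          (fun a : Finset (Fin n) => a.card = k - 1), E (insert p.1 a))]
    apply Finset.sum_congr rfl
    intro p _
    rw [Finset.sum_add_distrib]
    congr 1
    simp only [Prod.fst_swap, Prod.snd_swap]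
    rw [Finset.pair_comm p.2 p.1]
  rw [hAB, count2 E hk1, count3 E hk1 hk2]
  -- now pure algebra with binomial coefficients
  rw [rE, rE, rE]
  set e1 : ℝ := ∑ b ∈ univ.powerset.filter (fun b : Finset (Fin n) => b.card = k), E b
  set e2 : ℝ := ∑ b ∈ univ.powerset.filter (fun b : Finset (Fin n) => b.card = k + 1), E b
  set e3 : ℝ := ∑ b ∈ univ.powerset.filter (fun b : Finset (Fin n) => b.card = k - 1), E b
  have hc1 : ((n.choose k : ℝ)) ≠ 0 := by
    exact_mod_cast (Nat.choose_pos (by omega : k ≤ n)).ne'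
  have hc2 : ((n.choose (k + 1) : ℝ)) ≠ 0 := by
    exact_mod_cast (Nat.choose_pos hk2).ne'
  have hc3 : ((n.choose (k - 1) : ℝ)) ≠ 0 := by
    exact_mod_cast (Nat.choose_pos (by omega : k - 1 ≤ n)).ne'
  have hc4 : (((k + 1).choose 2 : ℕ) : ℝ) ≠ 0 := by
    exact_mod_cast (Nat.choose_pos (by omega : 2 ≤ k + 1)).ne'
  have hA : ((k * (n - k) : ℕ) : ℝ) * (n.choose k : ℝ)
      = 2 * ((n.choose (k + 1) : ℝ) * (((k + 1).choose 2 : ℕ) : ℝ)) := by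
    exact_mod_cast chooseI1 hk1 hk2
  have hB : (((n - k + 1).choose 2 : ℕ) : ℝ) * (n.choose (k - 1) : ℝ)
      = (n.choose (k + 1) : ℝ) * (((k + 1).choose 2 : ℕ) : ℝ) := by
    exact_mod_cast chooseI3 hk1 hk2
  set c : ℝ := (n.choose (k + 1) : ℝ) * ((k + 1).choose 2 : ℝ) with hc
  have hcne : c ≠ 0 := mul_ne_zero hc2 hc4
  have s1 : c⁻¹ * ((k * (n - k) : ℕ) : ℝ) = 2 * ((n.choose k : ℝ))⁻¹ := by
    rw [hc]; field_simp; push_cast; push_cast at hA; linear_combination hA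
  have s2 : c⁻¹ * (((k + 1).choose 2 : ℕ) : ℝ) = ((n.choose (k + 1) : ℝ))⁻¹ := by
    rw [hc]; field_simp
  have s3 : c⁻¹ * (((n - k + 1).choose 2 : ℕ) : ℝ) = ((n.choose (k - 1) : ℝ))⁻¹ := by
    rw [hc]; field_simp; push_cast; push_cast at hB; linear_combination hB
  calc c⁻¹ * (((k * (n - k) : ℕ) : ℝ) * e1 - (((k + 1).choose 2 : ℕ) : ℝ) * e2
        - (((n - k + 1).choose 2 : ℕ) : ℝ) * e3)
      = (c⁻¹ * ((k * (n - k) : ℕ) : ℝ)) * e1 - (c⁻¹ * (((k + 1).choose 2 : ℕ) : ℝ)) * e2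
        - (c⁻¹ * (((n - k + 1).choose 2 : ℕ) : ℝ)) * e3 := by ring
    _ = (2 * ((n.choose k : ℝ))⁻¹) * e1 - ((n.choose (k + 1) : ℝ))⁻¹ * e2
        - ((n.choose (k - 1) : ℝ))⁻¹ * e3 := by rw [s1, s2, s3]
    _ = 2 * (((n.choose k : ℝ))⁻¹ * e1) - ((n.choose (k + 1) : ℝ))⁻¹ * e2
        - ((n.choose (k - 1) : ℝ))⁻¹ * e3 := by ring

/-- `DTC(X) = ∑_{k=1}^{n-1} k · u_k(X)`. -/
theorem dtc_decomposition {Ω S : Type*} [MeasurableSpace Ω]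
    [Fintype S] [MeasurableSpace S] [MeasurableSingletonClass S]
    {n : ℕ} (hn : 2 ≤ n) (μ : Measure Ω) [IsProbabilityMeasure μ]
    (X : Fin n → Ω → S) (hX : ∀ i, Measurable (X i)) :
    ent μ (restr X univ) - (∑ j : Fin n, condEnt μ (X j) (restr X ({j} : Finset (Fin n))ᶜ))
      = ∑ k ∈ Finset.Icc 1 (n - 1), (k : ℝ) * uI μ X k := by
  classical
  have hnR : (n : ℝ) ≠ 0 := Nat.cast_ne_zero.mpr (by omega)
  have h0 : rE μ X 0 = 0 := by
    rw [rE]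
    have hB0 : univ.powerset.filter (fun b : Finset (Fin n) => b.card = 0)
        = {(∅ : Finset (Fin n))} := by
      ext b; simp [Finset.card_eq_zero]
    rw [hB0, Finset.sum_singleton]
    have hent : ent μ (restr X (∅ : Finset (Fin n))) = 0 := by
      rw [ent]
      apply Finset.sum_eq_zero
      intro z _
      have hz : restr X (∅ : Finset (Fin n)) ⁻¹' {z} = Set.univ := by
        ext ω
        simp only [Set.mem_preimage, Set.mem_singleton_iff, Set.mem_univ, iff_true]
        funext x; exact absurd x.2 (Finset.notMem_empty _)
      rw [hz]
      simp
    rw [hent]; simp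
  have hrhs : ∀ k ∈ Finset.Icc 1 (n - 1), (k : ℝ) * uI μ X k
      = (k : ℝ) * (2 * rE μ X k - rE μ X (k + 1) - rE μ X (k - 1)) := by
    intro k hk
    rw [Finset.mem_Icc] at hk
    rw [uI_eq_rE μ X hk.1 (by omega)]
  rw [Finset.sum_congr rfl hrhs, telescope_sum (rE μ X) h0 n hn]
  have hins : ∀ j : Fin n, insert j (({j} : Finset (Fin n))ᶜ) = univ := by
    intro j; ext x
    simp only [Finset.mem_insert, Finset.mem_compl, Finset.mem_singleton, Finset.mem_univ,
      iff_true]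
    by_cases h : x = j
    · exact Or.inl h
    · exact Or.inr h
  have hce : ∀ j : Fin n, condEnt μ (X j) (restr X (({j} : Finset (Fin n))ᶜ))
      = ent μ (restr X univ) - ent μ (restr X (({j} : Finset (Fin n))ᶜ)) := by
    intro j
    rw [condEnt, ent_pair_restr μ X (by simp : j ∉ ({j} : Finset (Fin n))ᶜ), hins j]
  rw [Finset.sum_congr rfl (fun j _ => hce j), Finset.sum_sub_distrib, Finset.sum_const,
    Finset.card_univ, Fintype.card_fin]
  have hren : rE μ X n = ent μ (restr X univ) := by
    rw [rE]
    have hBn : univ.powerset.filter (fun b : Finset (Fin n) => b.card = n)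
        = {(univ : Finset (Fin n))} := by
      ext b
      simp only [mem_filter, Finset.mem_powerset, Finset.subset_univ, true_and,
        Finset.mem_singleton]
      rw [← Finset.card_eq_iff_eq_univ, Fintype.card_fin]
    rw [hBn, Finset.sum_singleton, Nat.choose_self]
    simp
  have hren1 : rE μ X (n - 1)
      = (n : ℝ)⁻¹ * ∑ j : Fin n, ent μ (restr X (({j} : Finset (Fin n))ᶜ)) := by
    rw [rE]
    have hch : n.choose (n - 1) = n := by
      have h1 : n.choose (n - 1) = n.choose 1 := Nat.choose_symm (by omega : 1 ≤ n)
      rw [h1, Nat.choose_one_right]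
    have hBim : univ.powerset.filter (fun b : Finset (Fin n) => b.card = n - 1)
        = univ.image (fun j : Fin n => ({j} : Finset (Fin n))ᶜ) := by
      ext b
      simp only [mem_filter, Finset.mem_powerset, Finset.subset_univ, true_and,
        Finset.mem_image, Finset.mem_univ, true_and]
      constructor
      · intro hb
        have hc : bᶜ.card = 1 := by
          rw [Finset.card_compl, Fintype.card_fin, hb]; omega
        obtain ⟨j, hj⟩ := Finset.card_eq_one.mp hc
        exact ⟨j, by rw [← hj, compl_compl]⟩
      · rintro ⟨j, rfl⟩
        rw [Finset.card_compl, Finset.card_singleton, Fintype.card_fin]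
    have hinj : ∀ i ∈ univ, ∀ j ∈ univ,
        (fun j : Fin n => ({j} : Finset (Fin n))ᶜ) i
          = (fun j : Fin n => ({j} : Finset (Fin n))ᶜ) j → i = j := by
      intro i _ j _ h
      simp only at h
      have h2 : ({i} : Finset (Fin n)) = {j} := by
        have := congrArg (·ᶜ) h
        simpa [compl_compl] using this
      exact Finset.singleton_injective h2
    rw [hch, hBim, Finset.sum_image hinj]
  rw [hren, hren1]
  rw [nsmul_eq_mul]
  field_simp
  ring
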